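/- Let n, d, m ∈ ℕ, let 0 < ε_d ≤ 1, 0 < ε ≤ 1, 0 < δ ≤ 1, and fix u_1,…,u_n ∈ {−1/√n, 1/√n}. Let S satisfy Assumption(ψ, φ) with ψ ≤ 0.1 and φ ≤ ε_d/(4mn), and suppose θ = (w_1,…,w_n) is an (ε, δ)-approximate KKT point of the margin-maximization problem w.r.t. S with multipliers λ_1,…,λ_m. Fix l ∈ [m], set c = ε_d/(2mn), Δ_j = c·Σ_{k∈[m], k≠l} sign(⟨x_k, w_j⟩)·x_k, ŵ_j = w_j − u_j λ_l y_l σ'_{l,j}(θ) x_l, and w̃_j = ŵ_j + |u_j| λ_l σ'_{l,j}(θ) Δ_j. Then for every r ∈ [m] with r ≠ l and every j ∈ [n]: sign(⟨w̃_j, x_r⟩) = sign(⟨w_j, x_r⟩); in particular, the activation pattern of the corrected unlearned network on the retained data points equals that of the original network. -/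

import Mathlib

/-- ReLU activation-pattern indicator: `σ'(w, x) = 1` if `⟨w, x⟩ ≥ 0` and `0` otherwise. -/
noncomputable def act {d : ℕ} (w x : EuclideanSpace ℝ (Fin d)) : ℝ :=
  if 0 ≤ (inner ℝ w x : ℝ) then 1 else 0

/-- Two-layer ReLU network with fixed second layer `u` and first-layer weights `θ`. -/
noncomputable def net {n d : ℕ} (u : Fin n → ℝ)
    (θ : Fin n → EuclideanSpace ℝ (Fin d)) (x : EuclideanSpace ℝ (Fin d)) : ℝ :=
  ∑ j, u j * max ((inner ℝ (θ j) x : ℝ)) 0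

/-- `sign(z) = 1` if `z ≥ 0`, and `-1` otherwise. -/
noncomputable def sgn (z : ℝ) : ℝ := if 0 ≤ z then 1 else -1

/-- Auxiliary: adding `sgn T * A + e` with `|e| < A` preserves the sign of `T`. -/
lemma sgn_stable (I T A e : ℝ) (h : I = T + sgn T * A + e) (he : |e| < A) :
    sgn I = sgn T := by
  rcases abs_lt.mp he with ⟨h1, h2⟩
  unfold sgn at h ⊢
  by_cases hT : 0 ≤ T
  · rw [if_pos hT] at h ⊢
    rw [if_pos (show (0:ℝ) ≤ I by rw [h]; linarith)]
  · rw [if_neg hT] at h ⊢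
    push_neg at hT
    rw [if_neg (show ¬ (0:ℝ) ≤ I by push_neg; rw [h]; linarith)]

set_option maxHeartbeats 1000000 in
/-- The corrected unlearned weights `w̃_j = ŵ_j + |u_j| λ_l σ'_{l,j} Δ_j`
preserve the activation pattern of the original network on every retained data point:
`sign(⟨w̃_j, x_r⟩) = sign(⟨w_j, x_r⟩)` for all `r ≠ l` and all `j`. -/
theorem stmt_15
    (n d m : ℕ)
    (ε δ εd ψ φ : ℝ)
    (hεdpos : 0 < εd) (hεdle : εd ≤ 1)
    (hεpos : 0 < ε) (hεle : ε ≤ 1)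
    (hδpos : 0 < δ) (hδle : δ ≤ 1)
    (hψ : ψ ≤ 0.1) (hφ : φ ≤ εd / (4 * m * n))
    (u : Fin n → ℝ)
    (hu : ∀ j, u j = -(1 / Real.sqrt n) ∨ u j = 1 / Real.sqrt n)
    (x : Fin m → EuclideanSpace ℝ (Fin d)) (y : Fin m → ℝ)
    (hy : ∀ i, y i = 1 ∨ y i = -1)
    (hnorm : ∀ i, 1 - ψ ≤ ‖x i‖ ^ 2 ∧ ‖x i‖ ^ 2 ≤ 1 + ψ)
    (hortho : ∀ i j, i ≠ j → |(inner ℝ (x i) (x j) : ℝ)| ≤ φ)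
    (θ : Fin n → EuclideanSpace ℝ (Fin d)) (lam : Fin m → ℝ)
    (hlam : ∀ i, 0 ≤ lam i)
    (hstat : Real.sqrt (∑ j, ‖θ j - u j • ∑ i, (lam i * y i * act (θ j) (x i)) • x i‖ ^ 2) ≤ ε)
    (hcs : ∀ i, lam i * (y i * net u θ (x i) - 1) ≤ δ)
    (hpf : ∀ i, 1 ≤ y i * net u θ (x i))
    (l : Fin m)
    (θt : Fin n → EuclideanSpace ℝ (Fin d))
    (hθt : ∀ j, θt j = (θ j - (u j * lam l * y l * act (θ j) (x l)) • x l) +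
        (|u j| * lam l * act (θ j) (x l)) •
          ((εd / (2 * m * n)) •
            ∑ k ∈ Finset.univ.erase l, sgn ((inner ℝ (x k) (θ j) : ℝ)) • x k)) :
    ∀ r, r ≠ l → ∀ j,
      sgn ((inner ℝ (θt j) (x r) : ℝ)) = sgn ((inner ℝ (θ j) (x r) : ℝ)) := by
  intro r hrl j
  have hm : 0 < m := r.pos
  have hn : 0 < n := j.pos
  have hmr : (1:ℝ) ≤ m := by exact_mod_cast hm
  have hnr : (1:ℝ) ≤ n := by exact_mod_cast hn
  set c : ℝ := εd / (2 * m * n) with hcdef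
  have hc : 0 < c := by positivity
  have hφ0 : 0 ≤ φ := le_trans (abs_nonneg _) (hortho r l hrl)
  have hφc : φ ≤ c / 2 := by
    have hceq : c / 2 = εd / (4 * m * n) := by
      rw [hcdef, div_div]; ring_nf
    rw [hceq]; exact hφ
  have hcm : c * m ≤ 1 / 2 := by
    have hceq : c * m = εd / (2 * n) := by
      rw [hcdef]; field_simp
    rw [hceq, div_le_div_iff₀ (by positivity) (by norm_num)]
    nlinarith
  have hyl : |y l| = 1 := by rcases hy l with h | h <;> simp [h]
  set σ : ℝ := act (θ j) (x l) with hσdef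
  have hσ0 : 0 ≤ σ := by
    rw [hσdef]; unfold act; split <;> norm_num
  set a : ℝ := |u j| * lam l * σ with hadef
  have ha0 : 0 ≤ a :=
    mul_nonneg (mul_nonneg (abs_nonneg _) (hlam l)) hσ0
  set b : ℝ := u j * lam l * y l * σ with hbdef
  have hba : |b| = a := by
    rw [hbdef, hadef, abs_mul, abs_mul, abs_mul, hyl,
      abs_of_nonneg (hlam l), abs_of_nonneg hσ0]
    ring
  set T : ℝ := (inner ℝ (θ j) (x r) : ℝ) with hTdef
  have hsgn1 : ∀ z : ℝ, |sgn z| = 1 := by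
    intro z; unfold sgn; split <;> norm_num
  -- expand the inner product
  have hI : (inner ℝ (θt j) (x r) : ℝ) = T - b * inner ℝ (x l) (x r)
      + a * (c * ∑ k ∈ Finset.univ.erase l,
          sgn ((inner ℝ (x k) (θ j) : ℝ)) * (inner ℝ (x k) (x r) : ℝ)) := by
    rw [hθt j]
    simp only [inner_add_left, inner_sub_left, real_inner_smul_left, sum_inner,
      Finset.mul_sum]
    rfl
  -- split off the k = r term
  have hrm : r ∈ Finset.univ.erase l := by simp [hrl]
  have hsg : sgn ((inner ℝ (x r) (θ j) : ℝ)) = sgn T := by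
    rw [hTdef, real_inner_comm]
  have hself : (inner ℝ (x r) (x r) : ℝ) = ‖x r‖ ^ 2 := real_inner_self_eq_norm_sq _
  have hsplit : ∑ k ∈ Finset.univ.erase l,
      sgn ((inner ℝ (x k) (θ j) : ℝ)) * (inner ℝ (x k) (x r) : ℝ)
      = sgn T * ‖x r‖ ^ 2 + ∑ k ∈ (Finset.univ.erase l).erase r,
          sgn ((inner ℝ (x k) (θ j) : ℝ)) * (inner ℝ (x k) (x r) : ℝ) := by
    rw [← Finset.add_sum_erase _ _ hrm, hsg, hself]
  set R : ℝ := ∑ k ∈ (Finset.univ.erase l).erase r,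
      sgn ((inner ℝ (x k) (θ j) : ℝ)) * (inner ℝ (x k) (x r) : ℝ) with hRdef
  have hR : |R| ≤ m * φ := by
    calc |R| ≤ ∑ k ∈ (Finset.univ.erase l).erase r,
        |sgn ((inner ℝ (x k) (θ j) : ℝ)) * (inner ℝ (x k) (x r) : ℝ)| :=
          Finset.abs_sum_le_sum_abs _ _
    _ ≤ ∑ _k ∈ (Finset.univ.erase l).erase r, φ := by
        apply Finset.sum_le_sum
        intro k hk
        rw [abs_mul, hsgn1, one_mul]
        exact hortho k r (Finset.ne_of_mem_erase hk)
    _ = ((Finset.univ.erase l).erase r).card * φ := by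
        rw [Finset.sum_const, nsmul_eq_mul]
    _ ≤ m * φ := by
        apply mul_le_mul_of_nonneg_right _ hφ0
        have h := Finset.card_le_univ ((Finset.univ.erase l).erase r)
        simp only [Finset.card_univ, Fintype.card_fin] at h
        exact_mod_cast h
  set p : ℝ := (inner ℝ (x l) (x r) : ℝ) with hpdef
  have hI' : (inner ℝ (θt j) (x r) : ℝ)
      = T + a * c * (sgn T * ‖x r‖ ^ 2) + (a * c * R - b * p) := by
    rw [hI, hsplit]; ring
  -- bound the error term
  have hxl : |p| ≤ φ := hortho l r (Ne.symm hrl)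
  have herr : |a * c * R - b * p| ≤ a * c * (3 / 4) := by
    have h1 : |a * c * R| ≤ a * c * (m * φ) := by
      rw [abs_mul, abs_of_nonneg (mul_nonneg ha0 hc.le)]
      exact mul_le_mul_of_nonneg_left hR (mul_nonneg ha0 hc.le)
    have h2 : |b * p| ≤ a * φ := by
      rw [abs_mul, hba]
      exact mul_le_mul_of_nonneg_left hxl ha0
    have hmφ : (m : ℝ) * φ ≤ 1 / 4 := by
      have : (m : ℝ) * φ ≤ (m : ℝ) * (c / 2) :=
        mul_le_mul_of_nonneg_left hφc (by positivity)
      nlinarith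
    have h3 : a * c * (m * φ) ≤ a * c * (1 / 4) :=
      mul_le_mul_of_nonneg_left hmφ (mul_nonneg ha0 hc.le)
    have h4 : a * φ ≤ a * (c / 2) := mul_le_mul_of_nonneg_left hφc ha0
    calc |a * c * R - b * p|
        ≤ |a * c * R| + |b * p| := abs_sub _ _
      _ ≤ a * c * (m * φ) + a * φ := add_le_add h1 h2
      _ ≤ a * c * (1 / 4) + a * (c / 2) := add_le_add h3 h4
      _ = a * c * (3 / 4) := by ring
  have hxr : (0.9 : ℝ) ≤ ‖x r‖ ^ 2 := by
    have := (hnorm r).1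
    linarith
  clear hI hsplit hR hxl hstat hcs hpf hθt hortho hnorm hu hy hlam hrm hmr hnr
    hφ0 hφc hcm hφ hyl hψ hεdle hεpos hεle hδpos hδle
  clear_value c σ a b T R p
  rcases eq_or_lt_of_le ha0 with ha | ha
  · -- a = 0, so b = 0 and the inner product is unchanged
    have hb0 : b = 0 := by
      have h := hba; rw [← ha] at h; exact abs_eq_zero.mp h
    rw [hI', ← ha, hb0]
    norm_num
  · -- a > 0
    have hac : 0 < a * c := mul_pos ha hc
    apply sgn_stable _ _ (a * c * ‖x r‖ ^ 2) (a * c * R - b * p)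
    · rw [hI']; ring
    · have h1 : a * c * (3 / 4) < a * c * (0.9 : ℝ) := by nlinarith
      have h2 : a * c * (0.9 : ℝ) ≤ a * c * ‖x r‖ ^ 2 :=
        mul_le_mul_of_nonneg_left hxr hac.le
      exact lt_of_le_of_lt herr (lt_of_lt_of_le h1 h2)
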